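/- Let T : X → X be an invertible linear operator with ‖T⁻¹‖ < 1 (operator norm). Then for every x ∈ X and every V ∈ ∂_C P_K(x), the operator V + T is invertible and ‖(V + T)⁻¹‖ ≤ ‖T⁻¹‖ / (1 − ‖T⁻¹‖). -/
import Mathlib


open RealInnerProductSpace Filter Topology

variable {X : Type*} [NormedAddCommGroup X] [InnerProductSpace ℝ X] [FiniteDimensional ℝ X]

/-- The Clarke generalized Jacobian of a map `F : X → X` at `x`: the convex hull of all
limits of Fréchet derivatives of `F` along sequences of differentiability points
converging to `x`. -/
def clarkeJacobian (F : X → X) (x : X) : Set (X →L[ℝ] X) :=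
  convexHull ℝ {V : X →L[ℝ] X | ∃ u : ℕ → X,
    (∀ k, DifferentiableAt ℝ F (u k)) ∧
    Tendsto u atTop (𝓝 x) ∧
    Tendsto (fun k => fderiv ℝ F (u k)) atTop (𝓝 V)}

/-- `P` is the metric projection onto `K`: `P z` belongs to `K` and is a nearest point
of `K` to `z`. -/
def IsMetricProjection (K : Set X) (P : X → X) : Prop :=
  ∀ z : X, P z ∈ K ∧ ∀ y ∈ K, ‖z - P z‖ ≤ ‖z - y‖

/-- Metric projections onto convex sets are 1-Lipschitz. -/
lemma metricProjection_lipschitz (K : Set X) (hconv : Convex ℝ K)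
    (P : X → X) (hP : ∀ z : X, P z ∈ K ∧ ∀ y ∈ K, ‖z - P z‖ ≤ ‖z - y‖) :
    LipschitzWith 1 P := by
  have key : ∀ z : X, ∀ w ∈ K, ⟪z - P z, w - P z⟫ ≤ 0 := by
    intro z
    haveI : Nonempty K := ⟨⟨P z, (hP z).1⟩⟩
    rw [← norm_eq_iInf_iff_real_inner_le_zero hconv (hP z).1]
    refine le_antisymm (le_ciInf fun w => (hP z).2 w w.2) ?_
    exact ciInf_le ⟨0, Set.forall_mem_range.2 fun w => norm_nonneg _⟩ ((⟨P z, (hP z).1⟩ : K))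
  apply LipschitzWith.of_dist_le_mul
  intro a b
  rw [dist_eq_norm, dist_eq_norm, NNReal.coe_one, one_mul]
  have h1 := key a (P b) (hP b).1
  have h2 := key b (P a) (hP a).1
  have hd : ‖P a - P b‖ ^ 2
      = ⟪P a, P a⟫ - ⟪P a, P b⟫ - ⟪P b, P a⟫ + ⟪P b, P b⟫ := by
    rw [← real_inner_self_eq_norm_sq]
    simp only [inner_sub_left, inner_sub_right]
    ring
  have hg : ⟪a - b, P a - P b⟫
      = ⟪a, P a⟫ - ⟪a, P b⟫ - ⟪b, P a⟫ + ⟪b, P b⟫ := by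
    simp only [inner_sub_left, inner_sub_right]; ring
  simp only [inner_sub_left, inner_sub_right] at h1 h2
  have h3 : ‖P a - P b‖ ^ 2 ≤ ⟪a - b, P a - P b⟫ := by
    rw [hd, hg]; linarith
  have h4 : ⟪a - b, P a - P b⟫ ≤ ‖a - b‖ * ‖P a - P b‖ := real_inner_le_norm _ _
  nlinarith [norm_nonneg (a - b), norm_nonneg (P a - P b)]

/-- If `T` is invertible with `‖T⁻¹‖ < 1`, then for every Clarke generalized Jacobian `V` of
the projection, `V + T` is invertible with `‖(V + T)⁻¹‖ ≤ ‖T⁻¹‖ / (1 − ‖T⁻¹‖)`. -/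
theorem clarkeJacobian_add_T_invertible
    (K : Set X) (hne : K.Nonempty) (hcl : IsClosed K) (hconv : Convex ℝ K)
    (hcone : ∀ c : ℝ, 0 ≤ c → ∀ y ∈ K, c • y ∈ K)
    (P : X → X) (hP : IsMetricProjection K P)
    (T S : X →L[ℝ] X) (hTS : T * S = 1) (hST : S * T = 1) (hS : ‖S‖ < 1)
    (x : X) (V : X →L[ℝ] X) (hV : V ∈ clarkeJacobian P x) :
    ∃ W : X →L[ℝ] X, (V + T) * W = 1 ∧ W * (V + T) = 1 ∧ ‖W‖ ≤ ‖S‖ / (1 - ‖S‖) := by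
  have lip : LipschitzWith 1 P := metricProjection_lipschitz K hconv P hP
  have hV1 : ‖V‖ ≤ 1 := by
    have hsub : {V : X →L[ℝ] X | ∃ u : ℕ → X,
        (∀ k, DifferentiableAt ℝ P (u k)) ∧
        Tendsto u atTop (𝓝 x) ∧
        Tendsto (fun k => fderiv ℝ P (u k)) atTop (𝓝 V)} ⊆
        Metric.closedBall (0 : X →L[ℝ] X) 1 := by
      rintro V₀ ⟨u, hdiff, -, hlim⟩
      rw [Metric.mem_closedBall, dist_zero_right]
      have hle : ∀ k, ‖fderiv ℝ P (u k)‖ ≤ 1 := fun k => by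
        simpa using norm_fderiv_le_of_lipschitz ℝ lip (x₀ := u k)
      exact le_of_tendsto (hlim.norm) (Eventually.of_forall hle)
    have := convexHull_min hsub (convex_closedBall _ _) hV
    simpa [Metric.mem_closedBall, dist_zero_right] using this
  have hSV : ‖-(S * V)‖ < 1 := by
    rw [norm_neg]
    calc ‖S * V‖ ≤ ‖S‖ * ‖V‖ := norm_mul_le _ _
    _ ≤ ‖S‖ * 1 := by gcongr
    _ < 1 := by simpa using hS
  set u : (X →L[ℝ] X)ˣ := Units.oneSub (-(S * V)) hSV with hu
  have huval : (u : X →L[ℝ] X) = 1 + S * V := by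
    rw [hu, Units.val_oneSub, sub_neg_eq_add]
  have hfact : V + T = T * (u : X →L[ℝ] X) := by
    rw [huval, mul_add, mul_one, ← mul_assoc, hTS, one_mul, add_comm]
  have hSpos : (0:ℝ) < 1 - ‖S‖ := by linarith
  have hSVle : ‖S * V‖ ≤ ‖S‖ := by
    calc ‖S * V‖ ≤ ‖S‖ * ‖V‖ := norm_mul_le _ _
    _ ≤ ‖S‖ * 1 := by gcongr
    _ = ‖S‖ := mul_one _
  have hinv : ‖(↑u⁻¹ : X →L[ℝ] X)‖ ≤ 1 / (1 - ‖S‖) := by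
    have hrel : (↑u⁻¹ : X →L[ℝ] X) = 1 - (↑u⁻¹ : X →L[ℝ] X) * (S * V) := by
      have h0 : (↑u⁻¹ : X →L[ℝ] X) * (1 + S * V) = 1 := by rw [← huval]; exact u.inv_mul
      rw [mul_add, mul_one] at h0
      linear_combination (norm := abel) h0
    have h1 : ‖(↑u⁻¹ : X →L[ℝ] X)‖ ≤ 1 + ‖(↑u⁻¹ : X →L[ℝ] X)‖ * ‖S * V‖ := by
      calc ‖(↑u⁻¹ : X →L[ℝ] X)‖ = ‖1 - (↑u⁻¹ : X →L[ℝ] X) * (S * V)‖ := by rw [← hrel]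
      _ ≤ ‖(1 : X →L[ℝ] X)‖ + ‖(↑u⁻¹ : X →L[ℝ] X) * (S * V)‖ := norm_sub_le _ _
      _ ≤ 1 + ‖(↑u⁻¹ : X →L[ℝ] X)‖ * ‖S * V‖ := by
          gcongr
          · exact ContinuousLinearMap.norm_id_le
          · exact norm_mul_le _ _
    rw [le_div_iff₀ hSpos]
    nlinarith [norm_nonneg (↑u⁻¹ : X →L[ℝ] X)]
  refine ⟨(↑u⁻¹ : X →L[ℝ] X) * S, ?_, ?_, ?_⟩
  · rw [hfact, mul_assoc, ← mul_assoc (u : X →L[ℝ] X), u.mul_inv, one_mul, hTS]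
  · rw [hfact, mul_assoc, ← mul_assoc S, hST, one_mul, u.inv_mul]
  · calc ‖(↑u⁻¹ : X →L[ℝ] X) * S‖ ≤ ‖(↑u⁻¹ : X →L[ℝ] X)‖ * ‖S‖ := norm_mul_le _ _
    _ ≤ (1 / (1 - ‖S‖)) * ‖S‖ := by gcongr
    _ = ‖S‖ / (1 - ‖S‖) := by ring
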